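/- Let P = e_1…e_k be a path that is descending with respect to a charge drop schedule C, given by its arc sequence, and let 1 < i < k. If s̄(i) = k, then either the suffix e_i…e_k or the suffix e_{i+1}…e_k is descending with respect to the restriction of C to its vertices (with the drop at the subpath's first vertex set to 0); if s̲(i) = 1, then either the prefix e_1…e_i or the prefix e_1…e_{i−1} is descending with respect to the corresponding restriction of C. -/
import Mathlib


open Finset

namespace EV

noncomputable section

/-- Charge after traversing `i` arcs of a path with arc gains `g`, battery capacity `B`,
initial charge `b`. -/
def charge (B b : ℝ) (g : ℕ → ℝ) : ℕ → ℝ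
  | 0 => b
  | i + 1 => min (charge B b g i + g i) B

/-- The traversal of the path with `n` arcs is feasible from initial charge `b`. -/
def Feasible (B b : ℝ) (g : ℕ → ℝ) (n : ℕ) : Prop :=
  ∀ i < n, 0 ≤ charge B b g i + g i

open Classical in
/-- Maximum final charge `α_b(P)` for a path `P` with `n` arc gains `g`,
as an extended real (`⊥ = -∞` if the traversal is infeasible). -/
def alpha (B b : ℝ) (g : ℕ → ℝ) (n : ℕ) : EReal :=
  if Feasible B b g n then ((charge B b g n : ℝ) : EReal) else ⊥

/-- Gain of the `i`-th vertex (0-indexed): the sum of the first `i` arc gains. -/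
def vGain (g : ℕ → ℝ) (i : ℕ) : ℝ := ∑ t ∈ Finset.range i, g t

/-- `P` is traversable: `α_B(P) ≥ 0`, i.e. feasible from a full battery. -/
def Traversable (B : ℝ) (g : ℕ → ℝ) (n : ℕ) : Prop := Feasible B B g n

/-- `C` is a charge drop schedule for a path with `n` arcs (vertices `0,…,n`):
no drop at the first vertex, all drops nonnegative. -/
def Schedule (C : ℕ → ℝ) (n : ℕ) : Prop := C 0 = 0 ∧ ∀ i ≤ n, 0 ≤ C i

/-- Gain of vertex `i` with respect to the charge drop schedule `C`. -/
def cGain (g C : ℕ → ℝ) (i : ℕ) : ℝ := vGain g i - ∑ t ∈ Finset.range (i + 1), C t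

/-- `P` (with `n` arcs) is ascending with respect to the schedule `C`. -/
def AscendingC (B : ℝ) (g C : ℕ → ℝ) (n : ℕ) : Prop :=
  Traversable B g n ∧ ∀ i ≤ n, 0 ≤ cGain g C i ∧ cGain g C i ≤ cGain g C n

/-- `P` (with `n` arcs) is descending with respect to the schedule `C`. -/
def DescendingC (B : ℝ) (g C : ℕ → ℝ) (n : ℕ) : Prop :=
  Traversable B g n ∧ ∀ i ≤ n, cGain g C n ≤ cGain g C i ∧ cGain g C i ≤ 0

/-- `P` is monotone with respect to the schedule `C`. -/
def MonotoneC (B : ℝ) (g C : ℕ → ℝ) (n : ℕ) : Prop :=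
  AscendingC B g C n ∨ DescendingC B g C n

/-- Ascending with respect to the zero schedule. -/
def Ascending (B : ℝ) (g : ℕ → ℝ) (n : ℕ) : Prop := AscendingC B g (fun _ => 0) n

/-- Descending with respect to the zero schedule. -/
def Descending (B : ℝ) (g : ℕ → ℝ) (n : ℕ) : Prop := DescendingC B g (fun _ => 0) n

/-- Monotone with respect to the zero schedule. -/
def MonotonePath (B : ℝ) (g : ℕ → ℝ) (n : ℕ) : Prop := Ascending B g n ∨ Descending B g n

/-- The contiguous subpath whose arcs start at arc index `a`. -/
def SubPath (g : ℕ → ℝ) (a : ℕ) : ℕ → ℝ := fun t => g (a + t)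

/-- Restriction of a charge drop schedule to the subpath starting at vertex `a`:
no drop at the subpath's first vertex. -/
def restrict (C : ℕ → ℝ) (a : ℕ) : ℕ → ℝ := fun t => if t = 0 then 0 else C (a + t)

/-- First-arc-bounded with respect to a schedule `C` (no drop at the second vertex,
and all vertex gains lie between the gains of the first two vertices). -/
def FirstArcBoundedC (g C : ℕ → ℝ) (n : ℕ) : Prop :=
  C 1 = 0 ∧
    ((0 ≤ g 0 ∧ ∀ i ≤ n, 0 ≤ cGain g C i ∧ cGain g C i ≤ g 0) ∨
     (g 0 ≤ 0 ∧ ∀ i ≤ n, g 0 ≤ cGain g C i ∧ cGain g C i ≤ 0))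

/-- Last-arc-bounded with respect to a schedule `C` (no drops at the last two vertices,
and all vertex gains lie between the gains of the last two vertices). -/
def LastArcBoundedC (g C : ℕ → ℝ) (n : ℕ) : Prop :=
  C (n - 1) = 0 ∧ C n = 0 ∧
    ((0 ≤ g (n - 1) ∧ ∀ i ≤ n, cGain g C (n - 1) ≤ cGain g C i ∧ cGain g C i ≤ cGain g C n) ∨
     (g (n - 1) < 0 ∧ ∀ i ≤ n, cGain g C n ≤ cGain g C i ∧ cGain g C i ≤ cGain g C (n - 1)))

/-- First-arc-bounded (zero schedule). -/
def FirstArcBounded (g : ℕ → ℝ) (n : ℕ) : Prop := FirstArcBoundedC g (fun _ => 0) n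

/-- Last-arc-bounded (zero schedule). -/
def LastArcBounded (g : ℕ → ℝ) (n : ℕ) : Prop := LastArcBoundedC g (fun _ => 0) n

/-- Arc-bounded: first- or last-arc-bounded. -/
def ArcBounded (g : ℕ → ℝ) (n : ℕ) : Prop := FirstArcBounded g n ∨ LastArcBounded g n

/-- A funnel: arc-bounded and containing no monotone subpath of 2 or 3 consecutive arcs. -/
def Funnel (B : ℝ) (g : ℕ → ℝ) (n : ℕ) : Prop :=
  ArcBounded g n ∧ ∀ a m, (m = 2 ∨ m = 3) → a + m ≤ n → ¬ MonotonePath B (SubPath g a) m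

/-- `j = s̄(i)`: the maximal index `j ≥ i` (among arcs of a path with `n` arcs) such that
the subpath of arcs `i,…,j` is first-arc-bounded. -/
def IsSbar (g : ℕ → ℝ) (n i j : ℕ) : Prop :=
  i ≤ j ∧ j < n ∧ FirstArcBounded (SubPath g i) (j - i + 1) ∧
    ∀ j', i ≤ j' → j' < n → FirstArcBounded (SubPath g i) (j' - i + 1) → j' ≤ j

/-- `j = s̲(i)`: the minimal index `j ≤ i` such that the subpath of arcs `j,…,i`
is last-arc-bounded. -/
def IsSlow (g : ℕ → ℝ) (n i j : ℕ) : Prop :=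
  j ≤ i ∧ i < n ∧ LastArcBounded (SubPath g j) (i - j + 1) ∧
    ∀ j', j' ≤ i → LastArcBounded (SubPath g j') (i - j' + 1) → j ≤ j'

/-- Arc gains of the walk around a cycle with `m` arc gains `g`, starting at vertex `a`. -/
def cyc (g : ℕ → ℝ) (m a : ℕ) : ℕ → ℝ := fun t => g ((a + t) % m)

/-- A walk of length `ℓ` from `x` to `y` in the directed graph with arc relation `A`. -/
def IsWalk {V : Type*} (A : V → V → Prop) (w : ℕ → V) (ℓ : ℕ) (x y : V) : Prop :=
  w 0 = x ∧ w ℓ = y ∧ ∀ t < ℓ, A (w t) (w (t + 1))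

/-- The sequence of arc gains induced by a walk `w` in a graph with gain function `g`. -/
def walkGains {V : Type*} (g : V → V → ℝ) (w : ℕ → V) : ℕ → ℝ :=
  fun t => g (w t) (w (t + 1))

lemma charge_mono (B : ℝ) (g : ℕ → ℝ) : ∀ j, ∀ b b' : ℝ, b ≤ b' →
    charge B b g j ≤ charge B b' g j := by
  intro j
  induction j with
  | zero => intro b b' h; exact h
  | succ j ih =>
    intro b b' h
    exact min_le_min (by linarith [ih b b' h]) le_rfl

lemma charge_le (B b : ℝ) (g : ℕ → ℝ) (hb : b ≤ B) : ∀ j, charge B b g j ≤ B := by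
  intro j
  cases j with
  | zero => exact hb
  | succ j => exact min_le_right _ _

lemma charge_shift (B : ℝ) (g : ℕ → ℝ) (a : ℕ) :
    ∀ j, charge B (charge B B g a) (SubPath g a) j = charge B B g (a + j) := by
  intro j
  induction j with
  | zero => rfl
  | succ j ih =>
    show min (charge B (charge B B g a) (SubPath g a) j + g (a + j), B).1 _ = _
    have : a + (j + 1) = (a + j) + 1 := rfl
    rw [this]
    show _ = min (charge B B g (a + j) + g (a + j)) B
    rw [ih]

lemma feasible_suffix (B : ℝ) (g : ℕ → ℝ) (n a : ℕ)
    (hf : Feasible B B g n) (ha : a ≤ n) : Feasible B B (SubPath g a) (n - a) := by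
  intro j hj
  have h1 : charge B (charge B B g a) (SubPath g a) j = charge B B g (a + j) :=
    charge_shift B g a j
  have h2 : charge B (charge B B g a) (SubPath g a) j ≤ charge B B (SubPath g a) j :=
    charge_mono B (SubPath g a) j _ _ (charge_le B B g le_rfl a)
  have h3 := hf (a + j) (by omega)
  have : SubPath g a j = g (a + j) := rfl
  rw [this]
  linarith

lemma vGain_succ (g : ℕ → ℝ) (m : ℕ) : vGain g (m + 1) = vGain g m + g m := by
  rw [vGain, Finset.sum_range_succ, ← vGain]

lemma vGain_subPath (g : ℕ → ℝ) (a : ℕ) : ∀ j,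
    vGain (SubPath g a) j = vGain g (a + j) - vGain g a := by
  intro j
  induction j with
  | zero => simp [vGain]
  | succ j ih =>
    have h1 : a + (j + 1) = (a + j) + 1 := rfl
    rw [vGain, Finset.sum_range_succ (fun t => SubPath g a t) j, ← vGain, ih, h1,
      vGain_succ g (a + j)]
    have h2 : SubPath g a j = g (a + j) := rfl
    rw [h2]; ring

lemma sum_restrict (C : ℕ → ℝ) (a : ℕ) : ∀ j,
    ∑ t ∈ Finset.range (j + 1), restrict C a t =
      ∑ t ∈ Finset.range (a + j + 1), C t - ∑ t ∈ Finset.range (a + 1), C t := by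
  intro j
  induction j with
  | zero => simp [restrict]
  | succ j ih =>
    rw [Finset.sum_range_succ (fun t => restrict C a t) (j + 1), ih]
    have h1 : a + (j + 1) + 1 = (a + j + 1) + 1 := by omega
    rw [h1, Finset.sum_range_succ C (a + j + 1)]
    have h2 : restrict C a (j + 1) = C (a + j + 1) := by
      have : a + (j + 1) = a + j + 1 := by omega
      simp [restrict, this]
    rw [h2]; ring

lemma cGain_suffix (g C : ℕ → ℝ) (a j : ℕ) :
    cGain (SubPath g a) (restrict C a) j = cGain g C (a + j) - cGain g C a := by
  unfold cGain
  rw [vGain_subPath, sum_restrict]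
  have : a + j + 1 = (a + j) + 1 := rfl
  rw [this]; ring

lemma sum_C_mono (C : ℕ → ℝ) (n : ℕ) (hC : ∀ t ≤ n, 0 ≤ C t) {j m : ℕ}
    (hjm : j ≤ m) (hm : m ≤ n) :
    ∑ t ∈ Finset.range (j + 1), C t ≤ ∑ t ∈ Finset.range (m + 1), C t := by
  apply Finset.sum_le_sum_of_subset_of_nonneg
  · exact Finset.range_subset_range.mpr (by omega)
  · intro t ht _
    exact hC t (by simp at ht; omega)

lemma cGain_zero_schedule (g : ℕ → ℝ) (j : ℕ) :
    cGain g (fun _ => 0) j = vGain g j := by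
  simp [cGain]

/-- Let `P = e_0 … e_{n-1}` be descending with respect to a schedule `C` and
`1 ≤ i`, `i + 1 < n`. If `s̄(i) = n - 1` then the suffix `e_i … e_{n-1}` or
`e_{i+1} … e_{n-1}` is descending with respect to the restriction of `C` (drop at the
subpath's first vertex set to `0`); if `s̲(i) = 0` then the prefix `e_0 … e_i` or
`e_0 … e_{i-1}` is descending with respect to (the corresponding restriction of) `C`. -/
theorem maximal_arcBounded_descending (B : ℝ) (hB : 0 < B) (g C : ℕ → ℝ) (n : ℕ)
    (hC : Schedule C n) (hP : DescendingC B g C n) (i : ℕ) (h1 : 1 ≤ i) (h2 : i + 1 < n) :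
    (IsSbar g n i (n - 1) →
      DescendingC B (SubPath g i) (restrict C i) (n - i) ∨
      DescendingC B (SubPath g (i + 1)) (restrict C (i + 1)) (n - (i + 1))) ∧
    (IsSlow g n i 0 →
      DescendingC B g C (i + 1) ∨ DescendingC B g C i) := by
  obtain ⟨hTrav, hDesc⟩ := hP
  have hCnn : ∀ t ≤ n, 0 ≤ C t := hC.2
  -- vGain g (m+1) = vGain g m + g m
  have vsucc : ∀ m, vGain g (m + 1) = vGain g m + g m := by
    intro m; rw [vGain, Finset.sum_range_succ, ← vGain]
  -- a helper: cGain comparison from vGain comparison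
  have key : ∀ a b : ℕ, a ≤ b → b ≤ n → vGain g b ≤ vGain g a → cGain g C b ≤ cGain g C a := by
    intro a b hab hbn hv
    unfold cGain
    have := sum_C_mono C n hCnn hab hbn
    linarith
  constructor
  · -- suffix part
    rintro ⟨hin, hnn, hFAB, -⟩
    have hm : n - 1 - i + 1 = n - i := by omega
    rw [hm] at hFAB
    obtain ⟨-, hcase⟩ := hFAB
    -- vGain (SubPath g i) j = vGain g (i+j) - vGain g i
    have hvs : ∀ j, vGain (SubPath g i) j = vGain g (i + j) - vGain g i := vGain_subPath g i
    rcases hcase with ⟨hg0, hbd⟩ | ⟨hg0, hbd⟩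
    · -- 0 ≤ g i : suffix at i+1 is descending
      right
      have hg0' : SubPath g i 0 = g i := by simp [SubPath]
      constructor
      · exact feasible_suffix B g n (i + 1) hTrav (by omega)
      · intro j hj
        rw [cGain_suffix, cGain_suffix]
        have hup : cGain g C (i + 1 + j) ≤ cGain g C (i + 1) := by
          apply key _ _ (by omega) (by omega)
          have := (hbd (j + 1) (by omega)).2
          rw [cGain_zero_schedule, hvs] at this
          rw [hg0'] at this
          have h1 : i + (j + 1) = i + 1 + j := by omega
          rw [h1] at this
          have := vsucc i
          linarith
        have hlo : cGain g C n ≤ cGain g C (i + 1 + j) := (hDesc (i + 1 + j) (by omega)).1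
        have hn' : i + 1 + (n - (i + 1)) = n := by omega
        rw [hn']
        constructor <;> linarith
    · -- g i ≤ 0 : suffix at i is descending
      left
      have hg0' : SubPath g i 0 = g i := by simp [SubPath]
      constructor
      · exact feasible_suffix B g n i hTrav (by omega)
      · intro j hj
        rw [cGain_suffix, cGain_suffix]
        have hup : cGain g C (i + j) ≤ cGain g C i := by
          apply key _ _ (by omega) (by omega)
          have := (hbd j (by omega)).2
          rw [cGain_zero_schedule, hvs] at this
          linarith
        have hlo : cGain g C n ≤ cGain g C (i + j) := (hDesc (i + j) (by omega)).1
        have hn' : i + (n - i) = n := by omega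
        rw [hn']
        constructor <;> linarith
  · -- prefix part
    rintro ⟨-, hin, hLAB, -⟩
    have hm : i - 0 + 1 = i + 1 := by omega
    rw [hm] at hLAB
    obtain ⟨-, -, hcase⟩ := hLAB
    have hvs : ∀ j, vGain (SubPath g 0) j = vGain g j := by
      intro j
      rw [vGain_subPath]
      simp [vGain]
    have hi1 : i + 1 - 1 = i := by omega
    rcases hcase with ⟨hg0, hbd⟩ | ⟨hg0, hbd⟩
    · -- 0 ≤ g i : prefix of length i descending
      right
      constructor
      · intro j hj; exact hTrav j (by omega)
      · intro j hj
        refine ⟨?_, (hDesc j (by omega)).2⟩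
        apply key _ _ hj (by omega)
        have := (hbd j (by omega)).1
        rw [hi1, cGain_zero_schedule, cGain_zero_schedule, hvs, hvs] at this
        exact this
    · -- g i < 0 : prefix of length i+1 descending
      left
      constructor
      · intro j hj; exact hTrav j (by omega)
      · intro j hj
        refine ⟨?_, (hDesc j (by omega)).2⟩
        apply key _ _ hj (by omega)
        have := (hbd j (by omega)).1
        rw [cGain_zero_schedule, cGain_zero_schedule, hvs, hvs] at this
        exact this

end

end EV
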